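/- A value v belongs to the intersection over all n ∈ ℕ of the indexed list denotations S n if and only if v is a finite list, i.e., v = fold(right(a1, fold(right(a2, ... fold(right(ak, fold(left ()))) ...)))) for some k ≥ 0 and numeral values a1, ..., ak. -/
import Mathlib


inductive Val : Type
  | unit  : Val
  | zero  : Val
  | tru   : Val
  | fls   : Val
  | succ  : Val → Val
  | fold  : Val → Val
  | left  : Val → Val
  | right : Val → Val
  | pair  : Val → Val → Val
  | lam   : Val
deriving DecidableEq

/-- numeral values: zero, succ zero, ... -/
def isNumeral : Val → Prop
  | Val.zero => True
  | Val.succ v => isNumeral v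
  | _ => False

/-- denotation of the indexed recursive list type `Rec(n)(α ⇒ Unit + ℕ × α)` -/
def S : ℕ → Set Val
  | 0 => { v | ∃ w, v = Val.fold w }
  | n + 1 => { v | v = Val.fold (Val.left Val.unit) ∨
      ∃ a l, isNumeral a ∧ l ∈ S n ∧ v = Val.fold (Val.right (Val.pair a l)) }

/-- the value encoding a finite list of values -/
def mkList : List Val → Val
  | [] => Val.fold (Val.left Val.unit)
  | a :: as => Val.fold (Val.right (Val.pair a (mkList as)))

lemma mkList_mem (n : ℕ) : ∀ as : List Val, (∀ a ∈ as, isNumeral a) → mkList as ∈ S n := by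
  induction n with
  | zero =>
    rintro (_ | ⟨a, as⟩) _
    · exact ⟨_, rfl⟩
    · exact ⟨_, rfl⟩
  | succ n ih =>
    rintro (_ | ⟨a, as⟩) h
    · exact Or.inl rfl
    · exact Or.inr ⟨a, mkList as, h a (by simp), ih as (fun b hb => h b (by simp [hb])), rfl⟩

lemma fwd (v : Val) (h : ∀ n, v ∈ S n) :
    ∃ as : List Val, (∀ a ∈ as, isNumeral a) ∧ v = mkList as := by
  generalize hk : sizeOf v = k
  induction k using Nat.strong_induction_on generalizing v with
  | _ k ih =>
  subst hk
  rcases h 1 with h1 | ⟨a, l, ha, _, rfl⟩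
  · exact ⟨[], by simp, h1⟩
  · have hl : ∀ n, l ∈ S n := by
      intro n
      rcases h (n + 1) with h2 | ⟨a', l', _, hl', h2⟩
      · simp at h2
      · injection h2 with h2
        injection h2 with h2
        injection h2 with h2 h3
        subst h3; exact hl'
    obtain ⟨as, has, rfl⟩ := ih (sizeOf l) (by simp; omega) l hl rfl
    exact ⟨a :: as, fun b hb => by rcases List.mem_cons.mp hb with rfl | hb; exact ha; exact has b hb, rfl⟩

theorem mem_iInter_S_iff_finite_list (v : Val) :
    v ∈ ⋂ n : ℕ, S n ↔
      ∃ as : List Val, (∀ a ∈ as, isNumeral a) ∧ v = mkList as := by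
  simp only [Set.mem_iInter]
  constructor
  · exact fwd v
  · rintro ⟨as, has, rfl⟩ n
    exact mkList_mem n as has
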